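/- The set of automatic equivalence relations on ℕ is upward closed in the lattice Setoid ℕ: if E is automatic and E ≤ F (every pair related by E is related by F), then F is automatic. -/

import Mathlib

/-- Binary representation of `n : ℕ` over the alphabet `Option Bool`,
where the separator `□` is `none` and the digits `0`, `1` are `some false`, `some true`. -/
def natBits (n : ℕ) : List (Option Bool) := (Nat.bits n).map some

/-- The language `{ bits(m) ++ [□] ++ bits(n) | E relates m and n }` associated to an
equivalence relation `E` on ℕ. -/
def autoLang (E : Setoid ℕ) : Language (Option Bool) :=
  {w | ∃ m n : ℕ, E.r m n ∧ w = natBits m ++ [none] ++ natBits n}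

/-- An equivalence relation on ℕ is automatic if its associated language is regular,
i.e. accepted by some deterministic finite automaton. -/
def IsAutomatic (E : Setoid ℕ) : Prop := (autoLang E).IsRegular

namespace AutoUp

lemma bits_foldr (n : ℕ) : (Nat.bits n).foldr Nat.bit 0 = n := by
  induction n using Nat.binaryRec' with
  | zero => simp
  | bit b n h ih => rw [Nat.bits_append_bit n b h]; simp [ih]

lemma bits_injective : Function.Injective Nat.bits := by
  intro a b h
  rw [← bits_foldr a, ← bits_foldr b, h]

lemma bits_getLast?_ne (n : ℕ) : (Nat.bits n).getLast?.getD true = true := by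
  induction n using Nat.binaryRec' with
  | zero => simp
  | bit b n h ih =>
    rw [Nat.bits_append_bit n b h]
    rcases hn : Nat.bits n with _ | ⟨c, t⟩
    · have : n = 0 := by rw [← bits_foldr n, hn]; rfl
      simp [h this]
    · rw [hn] at ih; rwa [List.getLast?_cons_cons]

lemma exists_bits_eq (l : List Bool) (h : l.getLast?.getD true = true) :
    ∃ n, Nat.bits n = l := by
  induction l with
  | nil => exact ⟨0, by simp⟩
  | cons b t ih =>
    match t, ih, h with
    | [], _, h =>
      simp at h
      exact ⟨1, by simp [h]⟩
    | c :: t', ih, h =>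
      have ht' : (c :: t').getLast?.getD true = true := by
        rwa [List.getLast?_cons_cons] at h
      obtain ⟨n, hn⟩ := ih ht'
      have hn0 : n ≠ 0 := by
        intro h0; rw [h0] at hn; simp at hn
      exact ⟨Nat.bit b n, by rw [Nat.bits_append_bit n b (fun h0 => absurd h0 hn0), hn]⟩

lemma none_not_mem_natBits (n : ℕ) : (none : Option Bool) ∉ natBits n := by
  simp [natBits]

/-- Unique decoding of `u ++ none :: v` when `u, u'` contain no `none`. -/
lemma decode_unique : ∀ (u u' v v' : List (Option Bool)), (none : Option Bool) ∉ u →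
    (none : Option Bool) ∉ u' → u ++ none :: v = u' ++ none :: v' → u = u' ∧ v = v'
  | [], [], v, v', _, _, h => by simpa using h
  | [], a' :: u', v, v', _, hu', h => by
    simp at h
    exact absurd (h.1 ▸ (List.mem_cons_self : a' ∈ a' :: u')) (by simpa [h.1] using hu')
  | a :: u, [], v, v', hu, _, h => by
    simp at h
    exact absurd (h.1 ▸ (List.mem_cons_self : a ∈ a :: u)) (by simpa [h.1] using hu)
  | a :: u, a' :: u', v, v', hu, hu', h => by
    simp only [List.cons_append, List.cons.injEq] at h
    obtain ⟨h1, h2⟩ := decode_unique u u' v v' (fun hm => hu (List.mem_cons_of_mem _ hm))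
      (fun hm => hu' (List.mem_cons_of_mem _ hm)) h.2
    exact ⟨by rw [h.1, h1], h2⟩

lemma natBits_decode {m n m' n' : ℕ}
    (h : natBits m ++ none :: natBits n = natBits m' ++ none :: natBits n') :
    m = m' ∧ n = n' := by
  obtain ⟨h1, h2⟩ := decode_unique _ _ _ _ (none_not_mem_natBits m) (none_not_mem_natBits m') h
  constructor
  · exact bits_injective (List.map_injective_iff.mpr (Option.some_injective _) h1)
  · exact bits_injective (List.map_injective_iff.mpr (Option.some_injective _) h2)

section Machine

variable {σ : Type} (M : DFA (Option Bool) σ) (F : Setoid ℕ)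

/-- The state of `M` after reading `natBits m ++ [none]`. -/
def stf (m : ℕ) : σ := M.eval (natBits m ++ [none])

/-- relation on states of `M` induced by `F`. -/
def Rel (p q : σ) : Prop := ∃ m n : ℕ, F.r m n ∧ p = stf M m ∧ q = stf M n

/-- The new DFA. Phase 1 (`inl (q, fl)`): reading the first number, `q` the `M`-state,
`fl` whether the digit string read so far is a valid `Nat.bits`. Phase 2 (`inr (p, q, fl)`):
`p = stf` of first number, `q` the `M`-state from start on second block. `none` is a dead state. -/
def N : DFA (Option Bool) (Option ((σ × Bool) ⊕ (σ × σ × Bool))) where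
  step s a :=
    match s, a with
    | none, _ => none
    | some (Sum.inl (q, _)), some b => some (Sum.inl (M.step q (some b), b))
    | some (Sum.inl (q, fl)), none =>
        if fl then some (Sum.inr (M.step q none, M.start, true)) else none
    | some (Sum.inr (p, q, _)), some b => some (Sum.inr (p, M.step q (some b), b))
    | some (Sum.inr _), none => none
  start := some (Sum.inl (M.start, true))
  accept := {s | ∃ p q, s = some (Sum.inr (p, q, true)) ∧ Rel M F p (M.step q none)}

lemma N_dead (w : List (Option Bool)) : (N M F).evalFrom none w = none := by
  induction w with
  | nil => rfl
  | cons a w ih => exact ih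

lemma N_eval1 (l : List Bool) (q : σ) (fl : Bool) :
    (N M F).evalFrom (some (Sum.inl (q, fl))) (l.map some)
      = some (Sum.inl (M.evalFrom q (l.map some), l.getLast?.getD fl)) := by
  induction l generalizing q fl with
  | nil => rfl
  | cons b t ih =>
    show (N M F).evalFrom (some (Sum.inl (M.step q (some b), b))) (t.map some) = _
    rw [ih]
    rcases t with _ | ⟨c, t'⟩
    · rfl
    · rw [List.getLast?_cons_cons]
      obtain ⟨x, hx⟩ := Option.isSome_iff_exists.mp
        (List.getLast?_isSome.mpr (List.cons_ne_nil c t'))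
      simp [hx]

lemma N_eval2 (l : List Bool) (p q : σ) (fl : Bool) :
    (N M F).evalFrom (some (Sum.inr (p, q, fl))) (l.map some)
      = some (Sum.inr (p, M.evalFrom q (l.map some), l.getLast?.getD fl)) := by
  induction l generalizing q fl with
  | nil => rfl
  | cons b t ih =>
    show (N M F).evalFrom (some (Sum.inr (p, M.step q (some b), b))) (t.map some) = _
    rw [ih]
    rcases t with _ | ⟨c, t'⟩
    · rfl
    · rw [List.getLast?_cons_cons]
      obtain ⟨x, hx⟩ := Option.isSome_iff_exists.mp
        (List.getLast?_isSome.mpr (List.cons_ne_nil c t'))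
      simp [hx]

/-- Every word either consists of `some`s only, or splits at the first `none`. -/
lemma split_word : ∀ w : List (Option Bool),
    (∃ l : List Bool, w = l.map some) ∨
    (∃ (l : List Bool) (r : List (Option Bool)), w = l.map some ++ none :: r)
  | [] => Or.inl ⟨[], rfl⟩
  | none :: w => Or.inr ⟨[], w, rfl⟩
  | some b :: w => by
    rcases split_word w with ⟨l, rfl⟩ | ⟨l, r, rfl⟩
    · exact Or.inl ⟨b :: l, rfl⟩
    · exact Or.inr ⟨b :: l, r, rfl⟩

end Machine

end AutoUp

namespace AutoUp

variable {σ : Type} (M : DFA (Option Bool) σ) (E F : Setoid ℕ)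

lemma eval_eq (M' : DFA (Option Bool) σ) (x : List (Option Bool)) :
    M'.eval x = M'.evalFrom M'.start x := rfl

lemma natBits_append (m n : ℕ) :
    natBits m ++ [none] ++ natBits n = (Nat.bits m).map some ++ none :: (Nat.bits n).map some := by
  simp [natBits]

/-- Myhill–Nerode style: the state after `natBits m ++ [none]` determines the `E`-class. -/
lemma stf_related (hM : M.accepts = autoLang E) {a b : ℕ} (h : stf M a = stf M b) :
    E.r a b := by
  have hb : natBits b ++ [none] ++ natBits b ∈ M.accepts :=
    hM ▸ ⟨b, b, E.iseqv.refl b, rfl⟩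
  rw [DFA.mem_accepts, eval_eq, DFA.evalFrom_of_append] at hb
  have ha : natBits a ++ [none] ++ natBits b ∈ M.accepts := by
    rw [DFA.mem_accepts, eval_eq, DFA.evalFrom_of_append]
    have hsa : M.evalFrom M.start (natBits a ++ [none]) = stf M a := rfl
    have hsb : M.evalFrom M.start (natBits b ++ [none]) = stf M b := rfl
    rw [hsa, h, ← hsb]
    exact hb
  rw [hM] at ha
  obtain ⟨m', n', hmn, heq⟩ := ha
  rw [natBits_append, natBits_append] at heq
  obtain ⟨h1, h2⟩ := decode_unique _ _ _ _ (by simp) (by simp) heq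
  have e1 : a = m' := bits_injective (List.map_injective_iff.mpr (Option.some_injective _) h1)
  have e2 : b = n' := bits_injective (List.map_injective_iff.mpr (Option.some_injective _) h2)
  rw [e1, e2]
  exact hmn

end AutoUp

open AutoUp in
/-- The automatic equivalence relations on ℕ are upward closed in `Setoid ℕ`. -/
theorem automatic_upward_closed (E F : Setoid ℕ) (hE : IsAutomatic E) (hle : E ≤ F) :
    IsAutomatic F := by
  obtain ⟨σ, fin, M, hM⟩ := hE
  haveI := fin
  refine ⟨Option ((σ × Bool) ⊕ (σ × σ × Bool)), inferInstance, N M F, ?_⟩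
  ext w
  rw [DFA.mem_accepts, eval_eq]
  constructor
  · -- accepted ⇒ in autoLang F
    intro hw
    obtain ⟨p, q, heval, m', n', hF, hp, hq⟩ := hw
    rcases split_word w with ⟨l, rfl⟩ | ⟨l, r, rfl⟩
    · rw [show (N M F).start = some (Sum.inl (M.start, true)) from rfl, N_eval1] at heval
      simp at heval
    · have e1 : (N M F).evalFrom (N M F).start (l.map some ++ none :: r)
          = (N M F).evalFrom
              ((N M F).step ((N M F).evalFrom (N M F).start (l.map some)) none) r := by
        rw [show l.map some ++ none :: r = (l.map some ++ [none]) ++ r by simp,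
          DFA.evalFrom_of_append, DFA.evalFrom_append_singleton]
      rw [e1, show (N M F).start = some (Sum.inl (M.start, true)) from rfl, N_eval1] at heval
      rcases hfl : l.getLast?.getD true with _ | _
      · rw [hfl, show (N M F).step (some (Sum.inl (M.evalFrom M.start (l.map some), false))) none
          = none from rfl, N_dead] at heval
        exact absurd heval (by simp)
      · rw [hfl, show (N M F).step (some (Sum.inl (M.evalFrom M.start (l.map some), true))) none
          = some (Sum.inr (M.step (M.evalFrom M.start (l.map some)) none, M.start, true))
          from rfl] at heval
        rcases split_word r with ⟨l2, rfl⟩ | ⟨l2, r2, rfl⟩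
        · rw [N_eval2] at heval
          simp only [Option.some.injEq, Sum.inr.injEq, Prod.mk.injEq] at heval
          obtain ⟨hpe, hqe, hfle⟩ := heval
          obtain ⟨m, hm⟩ := exists_bits_eq l hfl
          obtain ⟨n, hn⟩ := exists_bits_eq l2 hfle
          have hpm : p = stf M m := by
            rw [← hpe, stf, natBits, hm, eval_eq, DFA.evalFrom_append_singleton]
          have hqn : M.step q none = stf M n := by
            rw [← hqe, stf, natBits, hn, eval_eq, DFA.evalFrom_append_singleton]
          have hEm : E.r m' m := stf_related M E hM (by rw [← hp, hpm])
          have hEn : E.r n' n := stf_related M E hM (by rw [← hq, hqn])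
          refine ⟨m, n, ?_, ?_⟩
          · exact F.iseqv.trans (F.iseqv.symm (Setoid.le_def.mp hle hEm))
              (F.iseqv.trans hF (Setoid.le_def.mp hle hEn))
          · rw [natBits_append, hm, hn]
        · rw [show l2.map some ++ none :: r2 = (l2.map some ++ [none]) ++ r2 by simp,
            DFA.evalFrom_of_append, DFA.evalFrom_append_singleton, N_eval2,
            show ∀ s : σ × σ × Bool, (N M F).step (some (Sum.inr s)) none = none
              from fun _ => rfl, N_dead] at heval
          exact absurd heval (by simp)
  · -- in autoLang F ⇒ accepted
    rintro ⟨m, n, hmn, rfl⟩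
    have e1 : (N M F).evalFrom (N M F).start (natBits m ++ [none] ++ natBits n)
        = (N M F).evalFrom ((N M F).step ((N M F).evalFrom (N M F).start (natBits m)) none)
            (natBits n) := by
      rw [DFA.evalFrom_of_append, DFA.evalFrom_append_singleton]
    rw [e1, show (N M F).start = some (Sum.inl (M.start, true)) from rfl, natBits, N_eval1,
      bits_getLast?_ne,
      show (N M F).step (some (Sum.inl (M.evalFrom M.start ((Nat.bits m).map some), true))) none
        = some (Sum.inr (M.step (M.evalFrom M.start ((Nat.bits m).map some)) none, M.start, true))
        from rfl, show natBits n = (Nat.bits n).map some from rfl, N_eval2, bits_getLast?_ne]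
    refine ⟨_, _, rfl, m, n, hmn, ?_, ?_⟩
    · rw [stf, natBits, eval_eq, DFA.evalFrom_append_singleton]
    · rw [stf, natBits, eval_eq, DFA.evalFrom_append_singleton]
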